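/- Under any (possibly adaptive) group testing strategy in which each of n individuals participates in at most Δ tests, the total number of positive test outcomes is at most Δ·k, where k is the number of infected individuals. Consequently, the number of possible outcome vectors is at most Σ_{i=0}^{Δk} C(m, i), and the success probability of any inference algorithm for a uniformly random k-subset of infected individuals is at most (Σ_{i=0}^{Δk} C(m, i)) / C(n, k). -/

import Mathlib

open Finset
open scoped Classical

/-- Counting converse: if each individual is in at most `Δ` tests, then any infected set
of size `k` yields at most `Δk` positive tests, so at most `∑_{i≤Δk} C(m,i)` outcome
vectors are possible, and the success probability of any inference algorithm over a
uniformly random `k`-subset of infected individuals is at most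
`(∑_{i≤Δk} C(m,i)) / C(n,k)`. -/
theorem stmt_6 (n m k Δ : ℕ)
    (tests : Fin m → Finset (Fin n))
    (hΔ : ∀ x : Fin n, (Finset.univ.filter fun j => x ∈ tests j).card ≤ Δ)
    (outcome : Finset (Fin n) → Fin m → Prop)
    (houtcome : ∀ S j, outcome S j ↔ (S ∩ tests j).Nonempty)
    (A : (Fin m → Bool) → Finset (Fin n)) :
    (∀ S : Finset (Fin n), S.card = k →
        (Finset.univ.filter fun j => outcome S j).card ≤ Δ * k) ∧
    ((Finset.univ.filter fun S : Finset (Fin n) =>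
        S.card = k ∧ A (fun j => decide (outcome S j)) = S).card
      ≤ ∑ i ∈ Finset.range (Δ * k + 1), m.choose i) ∧
    (((Finset.univ.filter fun S : Finset (Fin n) =>
        S.card = k ∧ A (fun j => decide (outcome S j)) = S).card : ℝ) / (n.choose k)
      ≤ (∑ i ∈ Finset.range (Δ * k + 1), (m.choose i : ℝ)) / (n.choose k)) := by
  have h1 : ∀ S : Finset (Fin n), S.card = k →
      (Finset.univ.filter fun j => outcome S j).card ≤ Δ * k := by
    intro S hS
    have hsub : (Finset.univ.filter fun j => outcome S j) ⊆
        S.biUnion (fun x => Finset.univ.filter fun j => x ∈ tests j) := by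
      intro j hj
      simp only [mem_filter, mem_univ, true_and] at hj
      rw [houtcome] at hj
      obtain ⟨x, hx⟩ := hj
      rw [mem_inter] at hx
      simp only [mem_biUnion, mem_filter, mem_univ, true_and]
      exact ⟨x, hx.1, hx.2⟩
    calc (Finset.univ.filter fun j => outcome S j).card
        ≤ (S.biUnion (fun x => Finset.univ.filter fun j => x ∈ tests j)).card :=
          card_le_card hsub
      _ ≤ ∑ x ∈ S, (Finset.univ.filter fun j => x ∈ tests j).card := card_biUnion_le
      _ ≤ ∑ _x ∈ S, Δ := sum_le_sum fun x _ => hΔ x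
      _ = Δ * k := by rw [sum_const, hS, smul_eq_mul, mul_comm]
  have h2 : (Finset.univ.filter fun S : Finset (Fin n) =>
        S.card = k ∧ A (fun j => decide (outcome S j)) = S).card
      ≤ ∑ i ∈ Finset.range (Δ * k + 1), m.choose i := by
    set T : Finset (Finset (Fin m)) :=
      (Finset.range (Δ * k + 1)).biUnion
        (fun i => Finset.powersetCard i (Finset.univ : Finset (Fin m))) with hT
    have hTcard : T.card = ∑ i ∈ Finset.range (Δ * k + 1), m.choose i := by
      rw [hT, card_biUnion]
      · apply Finset.sum_congr rfl
        intro i _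
        rw [Finset.card_powersetCard, Finset.card_univ, Fintype.card_fin]
      · intro i _ i' _ hii'
        rw [Function.onFun, Finset.disjoint_left]
        intro a ha ha'
        rw [Finset.mem_powersetCard] at ha ha'
        exact hii' (ha.2 ▸ ha'.2)
    rw [← hTcard]
    apply Finset.card_le_card_of_injOn
      (fun S => Finset.univ.filter fun j => outcome S j)
    · intro S hS
      simp only [Finset.mem_coe, mem_filter, mem_univ, true_and] at hS
      rw [Finset.mem_coe, hT, Finset.mem_biUnion]
      refine ⟨(Finset.univ.filter fun j => outcome S j).card, ?_, ?_⟩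
      · rw [Finset.mem_range, Nat.lt_succ_iff]
        exact h1 S hS.1
      · rw [Finset.mem_powersetCard]
        exact ⟨Finset.subset_univ _, rfl⟩
    · intro S hS S' hS' heq
      replace heq : (Finset.univ.filter fun j => outcome S j) =
          (Finset.univ.filter fun j => outcome S' j) := heq
      simp only [Finset.coe_filter, Set.mem_setOf_eq, mem_univ, true_and] at hS hS'
      have hvec : (fun j => decide (outcome S j)) = (fun j => decide (outcome S' j)) := by
        funext j
        have : outcome S j ↔ outcome S' j := by
          constructor
          · intro h
            have : j ∈ Finset.univ.filter fun j => outcome S j := by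
              simp [h]
            rw [heq] at this
            simpa using this
          · intro h
            have : j ∈ Finset.univ.filter fun j => outcome S' j := by
              simp [h]
            rw [← heq] at this
            simpa using this
        simp [decide_eq_decide, this]
      rw [← hS.2, ← hS'.2, hvec]
  refine ⟨h1, h2, ?_⟩
  apply div_le_div_of_nonneg_right _ (Nat.cast_nonneg _)
  calc ((Finset.univ.filter fun S : Finset (Fin n) =>
        S.card = k ∧ A (fun j => decide (outcome S j)) = S).card : ℝ)
        ≤ ((∑ i ∈ Finset.range (Δ * k + 1), m.choose i : ℕ) : ℝ) := by exact_mod_cast h2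
      _ = ∑ i ∈ Finset.range (Δ * k + 1), (m.choose i : ℝ) := by push_cast; rfl
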